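/- Let 𝒳 be a compact metric space, Q and Π Feller transition kernels on 𝒳, (Q_λ) a family of kernels with ‖Q_λ g − Q g‖_∞ → 0 as λ → 0 for each g ∈ C(𝒳), and (R_λ) kernels with ‖R_λ f − Π f‖_∞ → 0 as λ → 0 for all f ∈ C(𝒳). Set P_λ^L = Q_λ R_λ. If μ_λ are probability measures with μ_λ P_λ^L = μ_λ, then every weak* limit point μ̂ of (μ_λ) as λ → 0 satisfies μ̂ (QΠ) = μ̂, i.e., μ̂ is an invariant probability measure of QΠ. -/

import Mathlib

open MeasureTheory Filter


section Helpers
set_option linter.unusedSectionVars false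

variable {X : Type*} [MetricSpace X] [CompactSpace X] [MeasurableSpace X] [BorelSpace X]

lemma stmt9_bind_isProb (m : Measure X) [IsProbabilityMeasure m] (K : X → Measure X)
    (hK : Measurable K) (hKp : ∀ x, IsProbabilityMeasure (K x)) :
    IsProbabilityMeasure (m.bind K) := by
  constructor
  rw [Measure.bind_apply MeasurableSet.univ hK.aemeasurable]
  simp [(hKp _).measure_univ]

lemma stmt9_integrable_of_bdd {m : Measure X} [IsFiniteMeasure m] {f : X → ℝ}
    (hfm : AEStronglyMeasurable f m) {C : ℝ} (hfb : ∀ x, |f x| ≤ C) : Integrable f m :=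
  (integrable_const C).mono' hfm (Eventually.of_forall (fun x => by simpa using hfb x))

lemma stmt9_kint_bound {m : Measure X} [IsProbabilityMeasure m] {f : X → ℝ}
    {C : ℝ} (hfb : ∀ x, |f x| ≤ C) : |∫ y, f y ∂m| ≤ C := by
  have := norm_integral_le_of_norm_le_const (μ := m) (f := f) (C := C)
    (Eventually.of_forall (fun x => by simpa using hfb x))
  simpa using this

lemma stmt9_kint_measurable (K : X → Measure X) (hK : Measurable K)
    (hKp : ∀ x, IsProbabilityMeasure (K x))
    (f : X → ℝ) (hfm : Measurable f) {C : ℝ} (hfb : ∀ x, |f x| ≤ C) :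
    Measurable (fun x => ∫ y, f y ∂(K x)) := by
  have h1 : Measurable fun ν : Measure X => ∫⁻ y, ENNReal.ofReal (f y) ∂ν :=
    Measure.measurable_lintegral hfm.ennreal_ofReal
  have h2 : Measurable fun ν : Measure X => ∫⁻ y, ENNReal.ofReal (-(f y)) ∂ν :=
    Measure.measurable_lintegral hfm.neg.ennreal_ofReal
  have heq : (fun x => ∫ y, f y ∂(K x)) =
      fun x => (∫⁻ y, ENNReal.ofReal (f y) ∂(K x)).toReal
        - (∫⁻ y, ENNReal.ofReal (-(f y)) ∂(K x)).toReal := by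
    funext x
    exact integral_eq_lintegral_pos_part_sub_lintegral_neg_part
      (stmt9_integrable_of_bdd hfm.aestronglyMeasurable hfb)
  rw [heq]
  exact ((h1.comp hK).ennreal_toReal).sub ((h2.comp hK).ennreal_toReal)

lemma stmt9_integral_bind (m : Measure X) [IsProbabilityMeasure m]
    (K : X → Measure X) (hK : Measurable K) (hKp : ∀ x, IsProbabilityMeasure (K x))
    (f : X → ℝ) (hfm : Measurable f) {C : ℝ} (hfb : ∀ x, |f x| ≤ C) :
    ∫ y, f y ∂(m.bind K) = ∫ x, ∫ y, f y ∂(K x) ∂m := by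
  haveI := stmt9_bind_isProb m K hK hKp
  have hC : 0 ≤ C := by
    rcases isEmpty_or_nonempty X with h | h
    · have h1 := measure_univ (μ := m)
      rw [Set.univ_eq_empty_iff.mpr h] at h1
      simp at h1
    · obtain ⟨x⟩ := h; exact (abs_nonneg _).trans (hfb x)
  set g : X → ℝ := fun x => f x + C with hg
  have hgm : Measurable g := hfm.add_const C
  have hg0 : ∀ x, 0 ≤ g x := fun x => by
    have := (abs_le.mp (hfb x)).1; simp only [hg]; linarith
  have hgb : ∀ x, |g x| ≤ C + C := fun x => by
    have := abs_le.mp (hfb x); rw [abs_le]; constructor <;> simp only [hg] <;> linarith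
  have hgint : ∀ (ν : Measure X) [IsProbabilityMeasure ν], Integrable g ν := fun ν _ =>
    stmt9_integrable_of_bdd hgm.aestronglyMeasurable hgb
  have hfint : ∀ (ν : Measure X) [IsProbabilityMeasure ν], Integrable f ν := fun ν _ =>
    stmt9_integrable_of_bdd hfm.aestronglyMeasurable hfb
  set F : X → ℝ := fun x => ∫ y, g y ∂(K x) with hF
  have hFm : Measurable F := stmt9_kint_measurable K hK hKp g hgm hgb
  have hF0 : ∀ x, 0 ≤ F x := fun x => integral_nonneg hg0
  have hFb : ∀ x, |F x| ≤ C + C := fun x => stmt9_kint_bound hgb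
  have hFint : Integrable F m := stmt9_integrable_of_bdd hFm.aestronglyMeasurable hFb
  have key : ∫ y, g y ∂(m.bind K) = ∫ x, F x ∂m := by
    have step : ∀ x, ∫⁻ y, ENNReal.ofReal (g y) ∂(K x) = ENNReal.ofReal (F x) := fun x =>
      (ofReal_integral_eq_lintegral_ofReal (hgint _) (Eventually.of_forall hg0)).symm
    rw [integral_eq_lintegral_of_nonneg_ae (Eventually.of_forall hg0) hgm.aestronglyMeasurable,
        Measure.lintegral_bind hK.aemeasurable hgm.ennreal_ofReal.aemeasurable]
    simp_rw [step]
    rw [← ofReal_integral_eq_lintegral_ofReal hFint (Eventually.of_forall hF0),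
        ENNReal.toReal_ofReal (integral_nonneg hF0)]
  have expand : ∀ (ν : Measure X) [IsProbabilityMeasure ν],
      ∫ y, g y ∂ν = ∫ y, f y ∂ν + C := by
    intro ν _
    rw [hg]
    rw [integral_add (hfint ν) (integrable_const C), integral_const]
    simp
  have hFf : ∀ x, F x = (∫ y, f y ∂(K x)) + C := fun x => expand (K x)
  have : ∫ x, F x ∂m = (∫ x, ∫ y, f y ∂(K x) ∂m) + C := by
    simp_rw [hFf]
    rw [integral_add _ (integrable_const C), integral_const]
    · simp
    · exact stmt9_integrable_of_bdd
        (stmt9_kint_measurable K hK hKp f hfm hfb).aestronglyMeasurable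
        (fun x => stmt9_kint_bound hfb)
  have hgoal := key
  rw [expand (m.bind K), this] at hgoal
  linarith

end Helpers


/-- On a compact metric space, let `Q`, `Π` be Feller kernels, `Q_λ`
kernels with `‖Q_λ g − Qg‖_∞ → 0` and `R_λ` kernels with `‖R_λ f − Πf‖_∞ → 0` as
`λ → 0⁺`. If `μ_λ` are probability measures invariant for `P_λ^L = Q_λ R_λ`, then
every weak* limit point `μ̂` of `(μ_λ)` as `λ → 0⁺` is invariant for `QΠ`. -/
theorem stmt_9
    {X : Type*} [MetricSpace X] [CompactSpace X] [MeasurableSpace X] [BorelSpace X]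
    (Q Pi0 : X → Measure X)
    (hQ : ∀ x, IsProbabilityMeasure (Q x)) (hQm : Measurable Q)
    (hPi0 : ∀ x, IsProbabilityMeasure (Pi0 x)) (hPi0m : Measurable Pi0)
    (hQFeller : ∀ f : C(X, ℝ), Continuous fun x => ∫ y, f y ∂(Q x))
    (hPiFeller : ∀ f : C(X, ℝ), Continuous fun x => ∫ y, f y ∂(Pi0 x))
    (Ql Rl : ℝ → X → Measure X)
    (hQl : ∀ l x, IsProbabilityMeasure (Ql l x)) (hQlm : ∀ l, Measurable (Ql l))
    (hRl : ∀ l x, IsProbabilityMeasure (Rl l x)) (hRlm : ∀ l, Measurable (Rl l))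
    -- ‖Q_λ g − Q g‖_∞ → 0 as λ → 0⁺
    (hQconv : ∀ g : C(X, ℝ),
      Tendsto (fun l : ℝ => ⨆ x : X, |(∫ y, g y ∂(Ql l x)) - ∫ y, g y ∂(Q x)|)
        (nhdsWithin 0 (Set.Ioi 0)) (nhds 0))
    -- ‖R_λ f − Π f‖_∞ → 0 as λ → 0⁺
    (hRconv : ∀ f : C(X, ℝ),
      Tendsto (fun l : ℝ => ⨆ x : X, |(∫ y, f y ∂(Rl l x)) - ∫ y, f y ∂(Pi0 x)|)
        (nhdsWithin 0 (Set.Ioi 0)) (nhds 0))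
    (μ : ℝ → Measure X) (hμ : ∀ l, IsProbabilityMeasure (μ l))
    -- invariance : μ_λ (Q_λ R_λ) = μ_λ for all λ > 0
    (hinv : ∀ l : ℝ, 0 < l →
      (μ l).bind (fun x => (Ql l x).bind (Rl l)) = μ l)
    -- μ̂ : a weak* limit point of (μ_λ) along a sequence λ_n → 0⁺
    (μhat : Measure X) (hμhat : IsProbabilityMeasure μhat)
    (lam : ℕ → ℝ) (hlampos : ∀ n, 0 < lam n)
    (hlam0 : Tendsto lam atTop (nhds 0))
    (hweak : ∀ f : C(X, ℝ),
      Tendsto (fun n => ∫ x, f x ∂(μ (lam n))) atTop (nhds (∫ x, f x ∂μhat))) :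
    μhat.bind (fun x => (Q x).bind Pi0) = μhat := by

  classical
  have hKm : Measurable (fun x => (Q x).bind Pi0) :=
    (Measure.measurable_bind' hPi0m).comp hQm
  have hKp : ∀ x, IsProbabilityMeasure ((Q x).bind Pi0) := fun x => by
    haveI := hQ x
    exact stmt9_bind_isProb (Q x) Pi0 hPi0m hPi0
  have hlam' : Tendsto lam atTop (nhdsWithin 0 (Set.Ioi 0)) :=
    tendsto_nhdsWithin_of_tendsto_nhds_of_eventually_within lam hlam0
      (Eventually.of_forall hlampos)
  -- main integral identity
  have main : ∀ f : C(X, ℝ), ∫ y, f y ∂(μhat.bind (fun x => (Q x).bind Pi0)) = ∫ x, f x ∂μhat := by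
    intro f
    have hfb : ∀ x, |f x| ≤ ‖f‖ := fun x => by
      simpa [Real.norm_eq_abs] using f.norm_coe_le_norm x
    have hfm : Measurable (f : X → ℝ) := f.continuous.measurable
    set Pif : C(X, ℝ) := ⟨fun y => ∫ z, f z ∂(Pi0 y), hPiFeller f⟩ with hPifdef
    have hPifb : ∀ y, |Pif y| ≤ ‖f‖ := fun y => by
      haveI := hPi0 y
      exact stmt9_kint_bound hfb
    have hPifm : Measurable (Pif : X → ℝ) := Pif.continuous.measurable
    set QPif : C(X, ℝ) := ⟨fun x => ∫ y, Pif y ∂(Q x), hQFeller Pif⟩ with hQPifdef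
    have hQPifb : ∀ x, |QPif x| ≤ ‖f‖ := fun x => by
      haveI := hQ x
      exact stmt9_kint_bound hPifb
    -- the key claim via weak limits
    have claim : ∫ x, QPif x ∂μhat = ∫ x, f x ∂μhat := by
      set εR : ℝ → ℝ := fun l => ⨆ y : X, |(∫ z, f z ∂(Rl l y)) - ∫ z, f z ∂(Pi0 y)| with hεRdef
      set εQ : ℝ → ℝ := fun l =>
        ⨆ x : X, |(∫ y, Pif y ∂(Ql l x)) - ∫ y, Pif y ∂(Q x)| with hεQdef
      have hεR : Tendsto (fun n => εR (lam n)) atTop (nhds 0) := (hRconv f).comp hlam'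
      have hεQ : Tendsto (fun n => εQ (lam n)) atTop (nhds 0) := (hQconv Pif).comp hlam'
      have key : ∀ n, |(∫ x, f x ∂(μ (lam n))) - ∫ x, QPif x ∂(μ (lam n))|
          ≤ εR (lam n) + εQ (lam n) := by
        intro n
        set l := lam n with hl
        haveI := hμ l
        set Rf : X → ℝ := fun y => ∫ z, f z ∂(Rl l y) with hRfdef
        have hRfm : Measurable Rf := stmt9_kint_measurable (Rl l) (hRlm l) (hRl l) f hfm hfb
        have hRfb : ∀ y, |Rf y| ≤ ‖f‖ := fun y => by
          haveI := hRl l y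
          exact stmt9_kint_bound hfb
        set Pf : X → ℝ := fun x => ∫ y, Rf y ∂(Ql l x) with hPfdef
        have hPfm : Measurable Pf := stmt9_kint_measurable (Ql l) (hQlm l) (hQl l) Rf hRfm hRfb
        have hPfb : ∀ x, |Pf x| ≤ ‖f‖ := fun x => by
          haveI := hQl l x
          exact stmt9_kint_bound hRfb
        -- invariance rewriting
        have hKlm : Measurable (fun x => (Ql l x).bind (Rl l)) :=
          (Measure.measurable_bind' (hRlm l)).comp (hQlm l)
        have hKlp : ∀ x, IsProbabilityMeasure ((Ql l x).bind (Rl l)) := fun x => by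
          haveI := hQl l x
          exact stmt9_bind_isProb (Ql l x) (Rl l) (hRlm l) (hRl l x |> fun _ => hRl l)
        have step1 : ∫ x, f x ∂(μ l) = ∫ x, Pf x ∂(μ l) := by
          conv_lhs => rw [← hinv l (hlampos n)]
          rw [stmt9_integral_bind (μ l) _ hKlm hKlp f hfm hfb]
          refine integral_congr_ae (Eventually.of_forall fun x => ?_)
          haveI := hQl l x
          exact stmt9_integral_bind (Ql l x) (Rl l) (hRlm l) (hRl l) f hfm hfb
        -- bounds on sup
        have hbR : BddAbove (Set.range fun y => |Rf y - Pif y|) := by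
          refine ⟨‖f‖ + ‖f‖, ?_⟩
          rintro _ ⟨y, rfl⟩
          calc |Rf y - Pif y| ≤ |Rf y| + |Pif y| := abs_sub _ _
            _ ≤ ‖f‖ + ‖f‖ := add_le_add (hRfb y) (hPifb y)
        have hbQ : BddAbove (Set.range fun x =>
            |(∫ y, Pif y ∂(Ql l x)) - ∫ y, Pif y ∂(Q x)|) := by
          refine ⟨‖f‖ + ‖f‖, ?_⟩
          rintro _ ⟨x, rfl⟩
          have h1 : |∫ y, Pif y ∂(Ql l x)| ≤ ‖f‖ := by
            haveI := hQl l x; exact stmt9_kint_bound hPifb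
          have h2 : |∫ y, Pif y ∂(Q x)| ≤ ‖f‖ := by
            haveI := hQ x; exact stmt9_kint_bound hPifb
          calc _ ≤ |∫ y, Pif y ∂(Ql l x)| + |∫ y, Pif y ∂(Q x)| := abs_sub _ _
            _ ≤ ‖f‖ + ‖f‖ := add_le_add h1 h2
        -- pointwise estimate
        have step2 : ∀ x, |Pf x - QPif x| ≤ εR l + εQ l := by
          intro x
          haveI := hQl l x
          have pointR : ∀ y, |Rf y - Pif y| ≤ εR l := fun y => le_ciSup hbR y
          have intRf : Integrable Rf (Ql l x) :=
            stmt9_integrable_of_bdd hRfm.aestronglyMeasurable hRfb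
          have intPif : Integrable (Pif : X → ℝ) (Ql l x) :=
            stmt9_integrable_of_bdd hPifm.aestronglyMeasurable hPifb
          have h1 : |Pf x - ∫ y, Pif y ∂(Ql l x)| ≤ εR l := by
            rw [show Pf x - ∫ y, Pif y ∂(Ql l x) = ∫ y, (Rf y - Pif y) ∂(Ql l x) from
              (integral_sub intRf intPif).symm]
            exact stmt9_kint_bound pointR
          have h2 : |(∫ y, Pif y ∂(Ql l x)) - ∫ y, Pif y ∂(Q x)| ≤ εQ l := le_ciSup hbQ x
          have hQPifx : QPif x = ∫ y, Pif y ∂(Q x) := rfl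
          calc |Pf x - QPif x|
              ≤ |Pf x - ∫ y, Pif y ∂(Ql l x)| + |(∫ y, Pif y ∂(Ql l x)) - QPif x| :=
                abs_sub_le _ _ _
            _ ≤ εR l + εQ l := by rw [hQPifx]; exact add_le_add h1 h2
        -- integrate the estimate
        have intPf : Integrable Pf (μ l) :=
          stmt9_integrable_of_bdd hPfm.aestronglyMeasurable hPfb
        have intQPif : Integrable (QPif : X → ℝ) (μ l) :=
          stmt9_integrable_of_bdd QPif.continuous.measurable.aestronglyMeasurable hQPifb
        rw [step1, show (∫ x, Pf x ∂(μ l)) - ∫ x, QPif x ∂(μ l)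
            = ∫ x, (Pf x - QPif x) ∂(μ l) from (integral_sub intPf intQPif).symm]
        exact stmt9_kint_bound step2
      -- squeeze
      have h0 : Tendsto (fun n => εR (lam n) + εQ (lam n)) atTop (nhds 0) := by
        simpa using hεR.add hεQ
      have habs : Tendsto
          (fun n => |(∫ x, f x ∂(μ (lam n))) - ∫ x, QPif x ∂(μ (lam n))|) atTop (nhds 0) :=
        squeeze_zero (fun n => abs_nonneg _) key h0
      have hsub : Tendsto
          (fun n => |(∫ x, f x ∂(μ (lam n))) - ∫ x, QPif x ∂(μ (lam n))|) atTop
          (nhds |(∫ x, f x ∂μhat) - ∫ x, QPif x ∂μhat|) :=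
        ((hweak f).sub (hweak QPif)).abs
      have := tendsto_nhds_unique hsub habs
      have := abs_eq_zero.mp this
      linarith [sub_eq_zero.mp this]
    -- conclude main
    haveI := hμhat
    rw [stmt9_integral_bind μhat _ hKm hKp f hfm hfb]
    rw [show (∫ x, ∫ y, f y ∂((Q x).bind Pi0) ∂μhat) = ∫ x, QPif x ∂μhat from
      integral_congr_ae (Eventually.of_forall fun x => by
        haveI := hQ x
        exact stmt9_integral_bind (Q x) Pi0 hPi0m hPi0 f hfm hfb)]
    exact claim
  -- finish via extensionality
  haveI := hμhat
  haveI := stmt9_bind_isProb μhat _ hKm hKp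
  apply ext_of_forall_lintegral_eq_of_IsFiniteMeasure
  intro f
  set fc : C(X, ℝ) := ⟨fun x => (f x : ℝ), NNReal.continuous_coe.comp f.continuous⟩ with hfcdef
  have hfcb : ∀ x, |fc x| ≤ ‖fc‖ := fun x => by
    simpa [Real.norm_eq_abs] using fc.norm_coe_le_norm x
  have hint1 : Integrable (fun x => (f x : ℝ)) (μhat.bind (fun x => (Q x).bind Pi0)) :=
    stmt9_integrable_of_bdd fc.continuous.measurable.aestronglyMeasurable hfcb
  have hint2 : Integrable (fun x => (f x : ℝ)) μhat :=
    stmt9_integrable_of_bdd fc.continuous.measurable.aestronglyMeasurable hfcb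
  rw [lintegral_coe_eq_integral _ hint1, lintegral_coe_eq_integral _ hint2]
  congr 1
  exact main fc
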